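/- Let p be an odd prime, i an integer, r ≥ 0 an integer, and f(T) = (T - (1+p)^i + 1)^r. For n ≡ 1 - j (mod p-1) with i ≡ j (mod p-1) and n + i ≠ 1, v_p(f((1+p)^{1-n} - 1)) = r·(1 + v_p(n+i-1)); equivalently, the special value of the r-th power of the sphere's characteristic polynomial has p-adic valuation equal to r times v_p of the order of π_{2(n+i-1)-1} L_{K(1)} S^0. -/

import Mathlib

section aux
variable {p : ℕ} [Fact p.Prime]

lemma my_val_mul {x y : ℚ_[p]} (hx : x ≠ 0) (hy : y ≠ 0) :
    (x * y).valuation = x.valuation + y.valuation := Padic.valuation_mul hx hy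

lemma my_val_pow (x : ℚ_[p]) (hx : x ≠ 0) (r : ℕ) :
    (x ^ r).valuation = r * x.valuation := by
  induction r with
  | zero => simp [Padic.valuation_one]
  | succ k ih =>
    rw [pow_succ, Padic.valuation_mul (pow_ne_zero _ hx) hx, ih]
    push_cast; ring

lemma my_u_ne (hp : Odd p) : (1 + (p : ℚ_[p])) ≠ 0 := by
  have : ((1 + p : ℕ) : ℚ_[p]) ≠ 0 := Nat.cast_ne_zero.mpr (by omega)
  push_cast at this
  simpa using this

lemma my_val_u_pow (hp : Odd p) (k : ℕ) :
    ((1 + (p : ℚ_[p])) ^ k).valuation = 0 := by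
  have hpp : p.Prime := Fact.out
  have h : ((1 + (p : ℚ_[p])) ^ k) = (((1 + p) ^ k : ℕ) : ℚ_[p]) := by push_cast; ring
  rw [h, Padic.valuation_natCast, padicValNat.eq_zero_of_not_dvd]
  · simp
  · intro hdvd
    have h1 := hpp.dvd_of_dvd_pow hdvd
    rw [Nat.add_comm] at h1
    have h2 : p ∣ 1 := (Nat.dvd_add_right (dvd_refl p)).mp h1
    simp at h2
    exact hpp.ne_one h2

lemma my_key_nat (hp : Odd p) (k : ℕ) (hk : k ≠ 0) :
    ((1 + (p : ℚ_[p])) ^ k - 1) ≠ 0 ∧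
    ((1 + (p : ℚ_[p])) ^ k - 1).valuation = 1 + padicValNat p k := by
  have hpp : p.Prime := Fact.out
  have hlt : 1 < 1 + p := by have := hpp.two_le; omega
  have hlt2 : 1 < (1 + p) ^ k := Nat.one_lt_pow hk hlt
  have h : ((1 + (p : ℚ_[p])) ^ k - 1) = (((1 + p) ^ k - 1 : ℕ) : ℚ_[p]) := by
    push_cast [Nat.cast_sub hlt2.le]
    push_cast
    ring
  constructor
  · rw [h]
    exact_mod_cast Nat.cast_ne_zero.mpr (Nat.sub_ne_zero_of_lt hlt2)
  · rw [h, Padic.valuation_natCast]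
    have hx : ¬ p ∣ 1 + p := by
      intro h1
      rw [Nat.add_comm] at h1
      have h2 : p ∣ 1 := (Nat.dvd_add_right (dvd_refl p)).mp h1
      simp at h2; exact hpp.ne_one h2
    have := padicValNat.pow_sub_pow (p := p) hp (x := 1 + p) (y := 1)
      hlt (by simp) hx hk
    simp only [one_pow] at this
    rw [this, show 1 + p - 1 = p from by omega, padicValNat.self hpp.one_lt]
    push_cast; ring

lemma my_val_u_zpow (hp : Odd p) (m : ℤ) :
    ((1 + (p : ℚ_[p])) ^ m).valuation = 0 := by
  have hu := my_u_ne (p := p) hp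
  rcases le_or_gt 0 m with h | h
  · lift m to ℕ using h
    rw [zpow_natCast]; exact my_val_u_pow hp m
  · have hm : (0:ℤ) ≤ -m := by omega
    have h1 : (1 + (p : ℚ_[p])) ^ m * (1 + (p : ℚ_[p])) ^ (-m) = 1 := by
      rw [← zpow_add₀ hu]; simp
    have h2 := Padic.valuation_mul (p := p)
      (zpow_ne_zero m hu) (zpow_ne_zero (-m) hu)
    rw [h1, Padic.valuation_one] at h2
    lift -m to ℕ using hm with k hk
    rw [zpow_natCast, my_val_u_pow hp k] at h2
    omega

lemma my_key (hp : Odd p) (m : ℤ) (hm : m ≠ 0) :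
    ((1 + (p : ℚ_[p])) ^ m - 1) ≠ 0 ∧
    ((1 + (p : ℚ_[p])) ^ m - 1).valuation = 1 + padicValInt p m := by
  have hu := my_u_ne (p := p) hp
  rcases lt_or_gt_of_ne hm with h | h
  · -- m < 0
    have hm' : (0:ℤ) < -m := by omega
    obtain ⟨k, hk⟩ : ∃ k : ℕ, -m = k := ⟨(-m).toNat, by omega⟩
    have hk0 : k ≠ 0 := by omega
    obtain ⟨hne, hval⟩ := my_key_nat (p := p) hp k hk0
    have hfac : (1 + (p : ℚ_[p])) ^ m - 1
        = -((1 + (p : ℚ_[p])) ^ m) * ((1 + (p : ℚ_[p])) ^ k - 1) := by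
      have h3 : ((1 + (p : ℚ_[p])) ^ k : ℚ_[p]) = (1 + (p : ℚ_[p])) ^ (-m) := by
        rw [show (-m) = (k:ℤ) from hk, zpow_natCast]
      have hmul : (1 + (p : ℚ_[p])) ^ m * ((1 + (p : ℚ_[p])) ^ m)⁻¹ = 1 :=
        mul_inv_cancel₀ (zpow_ne_zero m hu)
      rw [h3, zpow_neg]
      linear_combination hmul
    have hne2 : -((1 + (p : ℚ_[p])) ^ m) ≠ 0 := neg_ne_zero.mpr (zpow_ne_zero m hu)
    constructor
    · rw [hfac]; exact mul_ne_zero hne2 hne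
    · rw [hfac, Padic.valuation_mul hne2 hne, hval]
      have hvneg : (-((1 + (p : ℚ_[p])) ^ m)).valuation
          = ((1 + (p : ℚ_[p])) ^ m).valuation := by
        rw [show -((1 + (p : ℚ_[p])) ^ m) = ((-1 : ℤ) : ℚ_[p]) * (1 + (p : ℚ_[p])) ^ m by
            push_cast; ring,
          Padic.valuation_mul (by norm_num) (zpow_ne_zero m hu),
          Padic.valuation_intCast]
        simp [padicValInt]
      rw [hvneg, my_val_u_zpow hp m]
      have : padicValInt p m = padicValNat p k := by
        rw [padicValInt, show m.natAbs = k by omega]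
      rw [this]; ring
  · -- m > 0
    obtain ⟨k, hk⟩ : ∃ k : ℕ, m = k := ⟨m.toNat, by omega⟩
    have hk0 : k ≠ 0 := by omega
    obtain ⟨hne, hval⟩ := my_key_nat (p := p) hp k hk0
    have hz : (1 + (p : ℚ_[p])) ^ m = (1 + (p : ℚ_[p])) ^ k := by
      rw [hk, zpow_natCast]
    rw [hz]
    refine ⟨hne, ?_⟩
    rw [hval]
    congr 1
    rw [padicValInt, show m.natAbs = k by omega]

end aux

/-- Let `p` be an odd prime, `f(T) = (T - (1+p)^i + 1)^r`.  For `n ≡ 1-j (mod p-1)`,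
`i ≡ j (mod p-1)` and `n + i ≠ 1`, the special value `f((1+p)^{1-n} - 1)` has
`p`-adic valuation `r·(1 + v_p(n+i-1))`, i.e. `r` times the valuation of
`|π_{2(n+i-1)-1} L_{K(1)} S⁰|`. -/
theorem statement17 (p : ℕ) [Fact p.Prime] (hp : Odd p) (i j n : ℤ) (r : ℕ)
    (hn : ((p : ℤ) - 1) ∣ (n - (1 - j))) (hi : ((p : ℤ) - 1) ∣ (i - j))
    (hni : n + i ≠ 1) :
    (((((1 + (p : ℚ_[p])) ^ (1 - n) - 1) - (1 + (p : ℚ_[p])) ^ i + 1)) ^ r).valuation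
      = (r : ℤ) * (1 + (padicValInt p (n + i - 1) : ℤ)) := by
  set u : ℚ_[p] := 1 + (p : ℚ_[p]) with hu_def
  have hu : u ≠ 0 := my_u_ne hp
  set m : ℤ := 1 - n - i with hm_def
  have hm : m ≠ 0 := by omega
  obtain ⟨hne, hval⟩ := my_key (p := p) hp m hm
  have hfac : (u ^ (1 - n) - 1) - u ^ i + 1 = u ^ i * (u ^ m - 1) := by
    rw [mul_sub, ← zpow_add₀ hu, show i + m = 1 - n by omega]
    ring
  have hx : u ^ i * (u ^ m - 1) ≠ 0 := mul_ne_zero (zpow_ne_zero i hu) hne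
  rw [hfac, my_val_pow _ hx r, Padic.valuation_mul (zpow_ne_zero i hu) hne,
    my_val_u_zpow hp i, hval]
  have : padicValInt p (n + i - 1) = padicValInt p m := by
    simp only [padicValInt, show n + i - 1 = -m by omega, Int.natAbs_neg]
  rw [this]; ring
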